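/- For any non-trivial word w in the free group on two generators, there is a polynomial P_w in ℤ[s,t,u] such that for all A, B in SL(2) over any commutative ring, tr(w(A,B)) = P_w(tr(A), tr(B), tr(AB)). -/

import Mathlib

open Matrix MvPolynomial

variable {R : Type} [CommRing R]

lemma ch2 (a : Matrix (Fin 2) (Fin 2) R) (ha : a.det = 1) :
    a * a = a.trace • a - 1 := by
  ext i j
  rw [Matrix.det_fin_two] at ha
  fin_cases i <;> fin_cases j <;>
    simp [Matrix.mul_apply, Fin.sum_univ_succ, Matrix.trace_fin_two, Matrix.one_apply] <;>
    first
    | ring1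
    | linear_combination -ha

lemma polar2 (a b : Matrix (Fin 2) (Fin 2) R) :
    b * a = ((a*b).trace - a.trace * b.trace) • (1 : Matrix (Fin 2) (Fin 2) R)
      + b.trace • a + a.trace • b - a * b := by
  ext i j
  fin_cases i <;> fin_cases j <;>
    simp [Matrix.mul_apply, Fin.sum_univ_succ, Matrix.trace_fin_two, Matrix.one_apply] <;>
    ring

lemma adj2 (a : Matrix (Fin 2) (Fin 2) R) :
    a.adjugate = a.trace • (1 : Matrix (Fin 2) (Fin 2) R) - a := by
  rw [Matrix.adjugate_fin_two]
  ext i j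
  fin_cases i <;> fin_cases j <;> simp [Matrix.trace_fin_two, Matrix.one_apply]

section Table

variable (a b : Matrix (Fin 2) (Fin 2) R)

lemma t13 (ha : a.det = 1) : a * (a * b) = a.trace • (a * b) - b := by
  rw [← mul_assoc, ch2 a ha, sub_mul, smul_mul_assoc, one_mul]
lemma t32 (hb : b.det = 1) : (a * b) * b = b.trace • (a * b) - a := by
  rw [mul_assoc, ch2 b hb, mul_sub, mul_smul_comm, mul_one]
lemma t33 (ha : a.det = 1) (hb : b.det = 1) : (a * b) * (a * b) = (a*b).trace • (a * b) - 1 := by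
  refine ch2 _ ?_
  rw [Matrix.det_mul, ha, hb, one_mul]
lemma t23 (ha : a.det = 1) (hb : b.det = 1) :
    b * (a * b) = (-a.trace) • (1 : Matrix (Fin 2) (Fin 2) R) + a + (a*b).trace • b := by
  rw [← mul_assoc, polar2 a b, sub_mul, add_mul, add_mul, smul_mul_assoc, smul_mul_assoc,
    smul_mul_assoc, one_mul, ch2 b hb, t32 a b hb]
  module
lemma t31 (ha : a.det = 1) (hb : b.det = 1) :
    (a * b) * a = (-b.trace) • (1 : Matrix (Fin 2) (Fin 2) R) + (a*b).trace • a + b := by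
  rw [mul_assoc, polar2 a b, mul_sub, mul_add, mul_add, mul_smul_comm, mul_smul_comm,
    mul_smul_comm, mul_one, ch2 a ha, t13 a b ha]
  module

lemma mul_combo (ha : a.det = 1) (hb : b.det = 1) (c0 c1 c2 c3 d0 d1 d2 d3 : R) :
    (c0 • (1 : Matrix (Fin 2) (Fin 2) R) + c1 • a + c2 • b + c3 • (a * b))
      * (d0 • (1 : Matrix (Fin 2) (Fin 2) R) + d1 • a + d2 • b + d3 • (a * b)) =
    (c0*d0 - c1*d1 + ((a*b).trace - a.trace*b.trace)*(c2*d1) - c2*d2 - a.trace*(c2*d3)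
        - b.trace*(c3*d1) - c3*d3) • 1
    + (c0*d1 + c1*d0 + a.trace*(c1*d1) + b.trace*(c2*d1) + c2*d3 + (a*b).trace*(c3*d1)
        - c3*d2) • a
    + (c0*d2 + c2*d0 - c1*d3 + a.trace*(c2*d1) + b.trace*(c2*d2) + (a*b).trace*(c2*d3)
        + c3*d1) • b
    + (c0*d3 + c3*d0 + c1*d2 + a.trace*(c1*d3) - c2*d1 + b.trace*(c3*d2)
        + (a*b).trace*(c3*d3)) • (a*b) := by
  simp only [add_mul, mul_add, smul_mul_assoc, mul_smul_comm, smul_smul, one_mul, mul_one]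
  rw [ch2 a ha, ch2 b hb, polar2 a b, t13 a b ha, t32 a b hb, t33 a b ha hb, t23 a b ha hb,
    t31 a b ha hb]
  module

end Table

/-- evaluation of an integer polynomial at the three traces -/
noncomputable def Etr (A B : Matrix.SpecialLinearGroup (Fin 2) R) :
    MvPolynomial (Fin 3) ℤ →+* R :=
  (MvPolynomial.eval
      ![Matrix.trace (A : Matrix (Fin 2) (Fin 2) R),
        Matrix.trace (B : Matrix (Fin 2) (Fin 2) R),
        Matrix.trace ((A : Matrix (Fin 2) (Fin 2) R) * (B : Matrix (Fin 2) (Fin 2) R))]).comp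
    (MvPolynomial.map (Int.castRingHom R))

@[simp] lemma Etr_X0 (A B : Matrix.SpecialLinearGroup (Fin 2) R) :
    Etr A B (X 0) = Matrix.trace (A : Matrix (Fin 2) (Fin 2) R) := by simp [Etr]
@[simp] lemma Etr_X1 (A B : Matrix.SpecialLinearGroup (Fin 2) R) :
    Etr A B (X 1) = Matrix.trace (B : Matrix (Fin 2) (Fin 2) R) := by simp [Etr]
@[simp] lemma Etr_X2 (A B : Matrix.SpecialLinearGroup (Fin 2) R) :
    Etr A B (X 2) = Matrix.trace ((A : Matrix (Fin 2) (Fin 2) R) * (B : Matrix (Fin 2) (Fin 2) R)) := by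
  simp [Etr]

def TrRep (w : FreeGroup (Fin 2)) : Prop :=
  ∃ p q r s : MvPolynomial (Fin 3) ℤ,
    ∀ (R : Type) [CommRing R] (A B : Matrix.SpecialLinearGroup (Fin 2) R),
      ((FreeGroup.lift ![A, B] w : Matrix.SpecialLinearGroup (Fin 2) R) :
          Matrix (Fin 2) (Fin 2) R) =
        Etr A B p • 1 + Etr A B q • (A : Matrix (Fin 2) (Fin 2) R)
          + Etr A B r • (B : Matrix (Fin 2) (Fin 2) R)
          + Etr A B s • ((A : Matrix (Fin 2) (Fin 2) R) * (B : Matrix (Fin 2) (Fin 2) R))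

lemma trRep_one : TrRep (1 : FreeGroup (Fin 2)) := by
  refine ⟨1, 0, 0, 0, ?_⟩
  intro R _ A B
  simp

lemma trRep_of (i : Fin 2) : TrRep (FreeGroup.of i) := by
  fin_cases i
  · refine ⟨0, 1, 0, 0, ?_⟩
    intro R _ A B
    simp [FreeGroup.lift_apply_of]
  · refine ⟨0, 0, 1, 0, ?_⟩
    intro R _ A B
    simp [FreeGroup.lift_apply_of]

lemma trRep_inv_of (i : Fin 2) : TrRep (FreeGroup.of i)⁻¹ := by
  fin_cases i
  · refine ⟨X 0, -1, 0, 0, ?_⟩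
    intro R _ A B
    rw [map_inv]
    simp only [FreeGroup.lift_apply_of, Matrix.cons_val_zero, Matrix.SpecialLinearGroup.coe_inv]
    rw [adj2]
    simp [sub_eq_add_neg]
  · refine ⟨X 1, 0, -1, 0, ?_⟩
    intro R _ A B
    rw [map_inv]
    simp only [FreeGroup.lift_apply_of, Matrix.cons_val_one, Matrix.head_cons,
      Matrix.SpecialLinearGroup.coe_inv]
    rw [adj2]
    simp [sub_eq_add_neg]

lemma trRep_mul (u v : FreeGroup (Fin 2)) (hu : TrRep u) (hv : TrRep v) : TrRep (u * v) := by
  obtain ⟨p, q, r, s, hu⟩ := hu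
  obtain ⟨p', q', r', s', hv⟩ := hv
  refine ⟨p*p' - q*q' + (X 2 - X 0 * X 1)*(r*q') - r*r' - X 0*(r*s') - X 1*(s*q') - s*s',
    p*q' + q*p' + X 0*(q*q') + X 1*(r*q') + r*s' + X 2*(s*q') - s*r',
    p*r' + r*p' - q*s' + X 0*(r*q') + X 1*(r*r') + X 2*(r*s') + s*q',
    p*s' + s*p' + q*r' + X 0*(q*s') - r*q' + X 1*(s*r') + X 2*(s*s'), ?_⟩
  intro R _ A B
  rw [_root_.map_mul, Matrix.SpecialLinearGroup.coe_mul, hu R A B, hv R A B,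
    mul_combo (A : Matrix (Fin 2) (Fin 2) R) (B : Matrix (Fin 2) (Fin 2) R) A.2 B.2]
  simp only [_root_.map_mul, map_sub, map_add, Etr_X0, Etr_X1, Etr_X2]

lemma trRep_all (w : FreeGroup (Fin 2)) : TrRep w := by
  induction w using FreeGroup.induction_on with
  | C1 => exact trRep_one
  | of i => exact trRep_of i
  | inv_of i _ => exact trRep_inv_of i
  | mul u v hu hv => exact trRep_mul u v hu hv

/-- For any non-trivial word `w` in the free group on two generators there is a
polynomial `P_w ∈ ℤ[s,t,u]` such that for all `A, B ∈ SL(2)` over any commutative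
ring, `tr(w(A,B)) = P_w(tr A, tr B, tr AB)`. -/
theorem exists_trace_polynomial (w : FreeGroup (Fin 2)) (hw : w ≠ 1) :
    ∃ P : MvPolynomial (Fin 3) ℤ,
      ∀ (R : Type) [CommRing R] (A B : Matrix.SpecialLinearGroup (Fin 2) R),
        Matrix.trace ((FreeGroup.lift ![A, B] w : Matrix.SpecialLinearGroup (Fin 2) R) :
            Matrix (Fin 2) (Fin 2) R) =
          MvPolynomial.eval
            ![Matrix.trace (A : Matrix (Fin 2) (Fin 2) R),
              Matrix.trace (B : Matrix (Fin 2) (Fin 2) R),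
              Matrix.trace ((A * B : Matrix.SpecialLinearGroup (Fin 2) R) :
                Matrix (Fin 2) (Fin 2) R)]
            (MvPolynomial.map (Int.castRingHom R) P) := by
  obtain ⟨p, q, r, s, h⟩ := trRep_all w
  refine ⟨C 2 * p + X 0 * q + X 1 * r + X 2 * s, ?_⟩
  intro R _ A B
  have hP : MvPolynomial.eval
      ![Matrix.trace (A : Matrix (Fin 2) (Fin 2) R),
        Matrix.trace (B : Matrix (Fin 2) (Fin 2) R),
        Matrix.trace ((A * B : Matrix.SpecialLinearGroup (Fin 2) R) :
          Matrix (Fin 2) (Fin 2) R)]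
      (MvPolynomial.map (Int.castRingHom R) (C 2 * p + X 0 * q + X 1 * r + X 2 * s))
      = Etr A B (C 2 * p + X 0 * q + X 1 * r + X 2 * s) := by
    simp [Etr]
  rw [hP, h R A B]
  simp only [map_add, _root_.map_mul, map_ofNat, Etr_X0, Etr_X1, Etr_X2, Matrix.trace_add,
    Matrix.trace_smul, Matrix.trace_one]
  push_cast
  simp only [smul_eq_mul]
  norm_num
  ring
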